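/- Let (X,d,W,η) be a UCW-hyperbolic space, C⊆X convex, T:C→C nonexpansive, and (xₙ) the Ishikawa iteration starting at x∈C with coefficients (λₙ),(sₙ)⊆[0,1]. Assume: (i) θ:ℕ→ℕ satisfies ∑_{k=0}^{θ(n)} λₖ(1-λₖ) ≥ n for all n; (ii) L,N₀∈ℕ with L ≥ 1 and sₙ ≤ 1 - 1/L for all n ≥ N₀; (iii) b>0 is such that for every δ>0 there is z∈C with d(x,z) ≤ b and d(z,Tz) < δ. Then for all ε>0 and all k∈ℕ there exists N with k ≤ N ≤ θ(P+k+N₀) such that d(x_N, Tx_N) < ε, where P = ⌈L(b+1)/(ε·η(b+1, ε/(L(b+1))))⌉. -/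

import Mathlib

set_option maxHeartbeats 4000000


theorem stmt_11 {X : Type*} [MetricSpace X] (W : X → X → ℝ → X)
    (W1 : ∀ (x y z : X), ∀ l ∈ Set.Icc (0:ℝ) 1,
      dist z (W x y l) ≤ (1 - l) * dist z x + l * dist z y)
    (W2 : ∀ (x y : X), ∀ l ∈ Set.Icc (0:ℝ) 1, ∀ l' ∈ Set.Icc (0:ℝ) 1,
      dist (W x y l) (W x y l') = |l - l'| * dist x y)
    (W3 : ∀ (x y : X), ∀ l ∈ Set.Icc (0:ℝ) 1, W x y l = W y x (1 - l))
    (W4 : ∀ (x y z w : X), ∀ l ∈ Set.Icc (0:ℝ) 1,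
      dist (W x z l) (W y w l) ≤ (1 - l) * dist x y + l * dist z w)
    (η : ℝ → ℝ → ℝ)
    (hηrange : ∀ r > (0:ℝ), ∀ ε, 0 < ε → ε ≤ 2 → 0 < η r ε ∧ η r ε ≤ 1)
    (hmod : ∀ r > (0:ℝ), ∀ ε, 0 < ε → ε ≤ 2 → ∀ a x y : X,
      dist x a ≤ r → dist y a ≤ r → ε * r ≤ dist x y →
      dist (W x y (1/2)) a ≤ (1 - η r ε) * r)
    (hηmono : ∀ ε, 0 < ε → ε ≤ 2 → ∀ r₁ r₂ : ℝ, 0 < r₁ → r₁ ≤ r₂ → η r₂ ε ≤ η r₁ ε)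
    (C : Set X)
    (hC : ∀ x ∈ C, ∀ y ∈ C, ∀ l ∈ Set.Icc (0:ℝ) 1, W x y l ∈ C)
    (T : X → X) (hTC : ∀ z ∈ C, T z ∈ C)
    (hTnon : ∀ z ∈ C, ∀ w ∈ C, dist (T z) (T w) ≤ dist z w)
    (lam s : ℕ → ℝ) (hlam : ∀ n, lam n ∈ Set.Icc (0:ℝ) 1) (hs : ∀ n, s n ∈ Set.Icc (0:ℝ) 1)
    (x0 : X) (hx0C : x0 ∈ C) (x : ℕ → X) (hx0 : x 0 = x0)
    (hrec : ∀ n, x (n+1) = W (x n) (T (W (x n) (T (x n)) (s n))) (lam n))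
    (θ : ℕ → ℕ)
    (hθ : ∀ n : ℕ, (n : ℝ) ≤ ∑ k ∈ Finset.range (θ n + 1), lam k * (1 - lam k))
    (L N₀ : ℕ) (hL : 1 ≤ L) (hsL : ∀ n ≥ N₀, s n ≤ 1 - 1 / (L:ℝ))
    (b : ℝ) (hb : 0 < b)
    (hafp : ∀ δ > (0:ℝ), ∃ z ∈ C, dist x0 z ≤ b ∧ dist z (T z) < δ) :
    ∀ ε > (0:ℝ), ∀ k : ℕ, ∃ N : ℕ, k ≤ N ∧
      N ≤ θ (⌈(L:ℝ) * (b+1) / (ε * η (b+1) (ε / ((L:ℝ) * (b+1))))⌉₊ + k + N₀) ∧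
      dist (x N) (T (x N)) < ε := by
  have hW0 : ∀ a c : X, W a c 0 = a := by
    intro a c
    have h := W1 a c a 0 (Set.mem_Icc.mpr ⟨le_refl 0, zero_le_one⟩)
    rw [dist_self] at h
    norm_num at h
    exact h.symm
  have hW1e : ∀ a c : X, W a c 1 = c := by
    intro a c
    have h := W1 a c c 1 (Set.mem_Icc.mpr ⟨zero_le_one, le_refl 1⟩)
    rw [dist_self] at h
    norm_num at h
    exact h.symm
  have hWdist : ∀ (a c : X) (l l' : ℝ), 0 ≤ l → l ≤ l' → l' ≤ 1 →
      dist (W a c l) (W a c l') = (l' - l) * dist a c := by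
    intro a c l l' h0 h1 h2
    have h := W2 a c l (Set.mem_Icc.mpr ⟨h0, by linarith⟩) l' (Set.mem_Icc.mpr ⟨by linarith, h2⟩)
    rw [h, abs_sub_comm, abs_of_nonneg (sub_nonneg.mpr h1)]
  have hda : ∀ (a c : X) (l : ℝ), 0 ≤ l → l ≤ 1 → dist a (W a c l) = l * dist a c := by
    intro a c l h0 h1
    have h := hWdist a c 0 l le_rfl h0 h1
    rw [hW0] at h
    simpa using h
  have hmiduniq : ∀ u v p q : X,
      dist u p = dist u v / 2 → dist p v = dist u v / 2 →
      dist u q = dist u v / 2 → dist q v = dist u v / 2 → p = q := by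
    intro u v p q h1 h2 h3 h4
    rcases eq_or_ne p q with h | hne
    · exact h
    exfalso
    have hc : 0 < dist p q := dist_pos.mpr hne
    have he : 0 < dist u v := by
      rcases (dist_nonneg : (0:ℝ) ≤ dist u v).lt_or_eq with h | h
      · exact h
      · exfalso
        have hp : u = p := dist_eq_zero.mp (by rw [h1, ← h]; norm_num)
        have hq : u = q := dist_eq_zero.mp (by rw [h3, ← h]; norm_num)
        exact hne (hp.symm.trans hq)
    have hce : dist p q ≤ dist u v := by
      have ht := dist_triangle p u q
      rw [dist_comm p u] at ht
      rw [h1, h3] at ht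
      linarith
    have hr2 : 0 < dist u v / 2 := by linarith
    have hep : 0 < dist p q / (dist u v / 2) := div_pos hc hr2
    have hel : dist p q / (dist u v / 2) ≤ 2 := by
      rw [div_le_iff₀ hr2]; linarith
    have hcancel : dist p q / (dist u v / 2) * (dist u v / 2) = dist p q :=
      div_mul_cancel₀ _ hr2.ne'
    have hmu := hmod (dist u v / 2) hr2 _ hep hel u p q
      (le_of_eq ((dist_comm p u).trans h1)) (le_of_eq ((dist_comm q u).trans h3))
      (le_of_eq hcancel)
    have hmv := hmod (dist u v / 2) hr2 _ hep hel v p q (le_of_eq h2) (le_of_eq h4)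
      (le_of_eq hcancel)
    have hηp := (hηrange (dist u v / 2) hr2 _ hep hel).1
    have ht := dist_triangle u (W p q (1/2)) v
    rw [dist_comm u (W p q (1/2))] at ht
    nlinarith [hmu, hmv, ht, hηp, he]
  have hseg : ∀ (a c : X) (α β : ℝ), 0 ≤ α → α ≤ β → β ≤ 1 →
      dist (W a c α) (W a c ((α+β)/2)) = dist (W a c α) (W a c β) / 2 ∧
      dist (W a c ((α+β)/2)) (W a c β) = dist (W a c α) (W a c β) / 2 := by
    intro a c α β h0 h1 h2
    have hm0 : α ≤ (α+β)/2 := by linarith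
    have hm1 : (α+β)/2 ≤ β := by linarith
    rw [hWdist a c α ((α+β)/2) h0 hm0 (by linarith),
        hWdist a c ((α+β)/2) β (by linarith) hm1 h2,
        hWdist a c α β h0 h1 h2]
    constructor <;> ring
  have hdyadic : ∀ (a c : X) (n j : ℕ), j ≤ 2^n →
      W a (W a c (1/2)) ((j:ℝ)/2^n) = W a c ((j:ℝ)/2^(n+1)) := by
    intro a c n
    induction n with
    | zero =>
      intro j hj
      norm_num at hj
      interval_cases j
      · simp [hW0]
      · norm_num [hW1e]
    | succ n ih =>
      intro j hj
      have hpow : (2:ℕ)^(n+1) = 2*2^n := by ring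
      rcases Nat.even_or_odd j with ⟨i, hji⟩ | ⟨i, hji⟩
      · subst hji
        have hi2 : i ≤ 2^n := by omega
        have e1 : ((i+i:ℕ):ℝ)/2^(n+1) = (i:ℝ)/2^n := by
          push_cast
          rw [pow_succ]
          field_simp
          ring
        have e2 : ((i+i:ℕ):ℝ)/2^(n+1+1) = (i:ℝ)/2^(n+1) := by
          push_cast
          rw [pow_succ _ (n+1)]
          field_simp
          ring
        rw [e1, e2]
        exact ih i hi2
      · subst hji
        have hi1 : i + 1 ≤ 2^n := by omega
        have h2n : (0:ℝ) < 2^n := by positivity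
        have h2n1 : (0:ℝ) < 2^(n+1) := by positivity
        have hiR : ((i+1:ℕ):ℝ) ≤ 2^n := by
          have h : ((i+1:ℕ):ℝ) ≤ ((2^n:ℕ):ℝ) := Nat.cast_le.mpr hi1
          push_cast at h ⊢
          linarith
        have e1 := ih i (by omega)
        have e2 := ih (i+1) hi1
        have hmid1 : (((i:ℝ)/2^n + ((i+1:ℕ):ℝ)/2^n)/2) = ((2*i+1:ℕ):ℝ)/2^(n+1) := by
          push_cast
          rw [pow_succ]
          field_simp
          ring
        have hmid2 : (((i:ℝ)/2^(n+1) + ((i+1:ℕ):ℝ)/2^(n+1))/2) = ((2*i+1:ℕ):ℝ)/2^(n+1+1) := by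
          push_cast
          rw [pow_succ _ (n+1)]
          field_simp
          ring
        have hα0 : (0:ℝ) ≤ (i:ℝ)/2^n := by positivity
        have hcast : (i:ℝ) ≤ ((i+1:ℕ):ℝ) := by push_cast; linarith
        have hαβ : (i:ℝ)/2^n ≤ ((i+1:ℕ):ℝ)/2^n := (div_le_div_iff_of_pos_right h2n).mpr hcast
        have hβ1 : ((i+1:ℕ):ℝ)/2^n ≤ 1 := by
          rw [div_le_one h2n]
          exact hiR
        have hu1 := hseg a (W a c (1/2)) ((i:ℝ)/2^n) (((i+1:ℕ):ℝ)/2^n) hα0 hαβ hβ1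
        rw [hmid1] at hu1
        have hα0' : (0:ℝ) ≤ (i:ℝ)/2^(n+1) := by positivity
        have hαβ' : (i:ℝ)/2^(n+1) ≤ ((i+1:ℕ):ℝ)/2^(n+1) := (div_le_div_iff_of_pos_right h2n1).mpr hcast
        have hβ1' : ((i+1:ℕ):ℝ)/2^(n+1) ≤ 1 := by
          rw [div_le_one h2n1, pow_succ]
          nlinarith [hiR, h2n]
        have hc1 := hseg a c ((i:ℝ)/2^(n+1)) (((i+1:ℕ):ℝ)/2^(n+1)) hα0' hαβ' hβ1'
        rw [hmid2] at hc1
        rw [← e1, ← e2] at hc1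
        exact hmiduniq _ _ _ _ hu1.1 hu1.2 hc1.1 hc1.2
  have hsub : ∀ (a c : X) (t : ℝ), 0 ≤ t → t ≤ 1 →
      W a (W a c (1/2)) t = W a c (t/2) := by
    intro a c t ht0 ht1
    have key : ∀ n : ℕ, dist (W a (W a c (1/2)) t) (W a c (t/2)) ≤ dist a c / 2^n := by
      intro n
      have h2n : (0:ℝ) < 2^n := by positivity
      have h2n1 : (0:ℝ) < 2^(n+1) := by positivity
      set j := ⌊t * 2^n⌋₊ with hjdef
      have hj0 : (0:ℝ) ≤ t*2^n := by positivity
      have hjle : (j:ℝ) ≤ t * 2^n := Nat.floor_le hj0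
      have hjlt : t * 2^n < (j:ℝ) + 1 := Nat.lt_floor_add_one _
      have hjn : j ≤ 2^n := by
        have h : (j:ℝ) ≤ ((2^n : ℕ):ℝ) := by push_cast; nlinarith
        exact_mod_cast h
      have hjm : (j:ℝ)/2^n ≤ 1 := by rw [div_le_one h2n]; nlinarith
      have hjm0 : (0:ℝ) ≤ (j:ℝ)/2^n := by positivity
      have hle1 : (j:ℝ)/2^n ≤ t := by rw [div_le_iff₀ h2n]; exact hjle
      have hb : t - (j:ℝ)/2^n ≤ 1/2^n := by
        rw [sub_le_iff_le_add, ← add_div]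
        rw [le_div_iff₀ h2n]
        linarith
      have hid := hdyadic a c n j hjn
      have hdnn : (0:ℝ) ≤ dist a c := dist_nonneg
      have hd1 : dist (W a (W a c (1/2)) t) (W a (W a c (1/2)) ((j:ℝ)/2^n))
          ≤ (1/2^(n+1)) * dist a c := by
        rw [dist_comm, hWdist a (W a c (1/2)) ((j:ℝ)/2^n) t hjm0 hle1 ht1,
          hda a c (1/2) (by norm_num) (by norm_num)]
        have h12 : (1:ℝ)/2^(n+1) * dist a c = (1/2^n) * (1/2 * dist a c) := by
          rw [pow_succ]; ring
        rw [h12]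
        exact mul_le_mul_of_nonneg_right hb (by positivity)
      have hd2 : dist (W a c ((j:ℝ)/2^(n+1))) (W a c (t/2)) ≤ (1/2^(n+1)) * dist a c := by
        have hjt : (j:ℝ)/2^(n+1) ≤ t/2 := by
          rw [pow_succ]
          rw [div_le_div_iff₀ (by positivity) (by norm_num)]
          nlinarith [hle1, h2n]
        have hth : t/2 ≤ 1 := by linarith
        rw [hWdist a c ((j:ℝ)/2^(n+1)) (t/2) (by positivity) hjt hth]
        have hsmall : t/2 - (j:ℝ)/2^(n+1) ≤ 1/2^(n+1) := by
          have e : (j:ℝ)/2^(n+1) = ((j:ℝ)/2^n)/2 := by rw [pow_succ]; ring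
          have e' : (1:ℝ)/2^(n+1) = (1/2^n)/2 := by rw [pow_succ]; ring
          rw [e, e']
          linarith
        exact mul_le_mul_of_nonneg_right hsmall hdnn
      rw [hid] at hd1
      calc dist (W a (W a c (1/2)) t) (W a c (t/2))
          ≤ dist (W a (W a c (1/2)) t) (W a c ((j:ℝ)/2^(n+1)))
            + dist (W a c ((j:ℝ)/2^(n+1))) (W a c (t/2)) := dist_triangle _ _ _
        _ ≤ (1/2^(n+1)) * dist a c + (1/2^(n+1)) * dist a c := add_le_add hd1 hd2
        _ = dist a c / 2^n := by rw [pow_succ]; ring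
    by_contra hcon2
    have hcpos : 0 < dist (W a (W a c (1/2)) t) (W a c (t/2)) :=
      dist_pos.mpr hcon2
    obtain ⟨n, hn⟩ := exists_nat_gt (dist a c / dist (W a (W a c (1/2)) t) (W a c (t/2)))
    have h2n : (n:ℝ) ≤ 2^n := by exact_mod_cast (Nat.lt_two_pow_self (n := n)).le
    have hkey := key n
    have hpow : (0:ℝ) < 2^n := by positivity
    rw [div_lt_iff₀ hcpos] at hn
    rw [le_div_iff₀ hpow] at hkey
    nlinarith [hkey, hn, hcpos, h2n]
  have hconvhalf : ∀ r : ℝ, 0 < r → ∀ e : ℝ, 0 < e → e ≤ 2 → ∀ l : ℝ, 0 ≤ l → l ≤ 1/2 →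
      ∀ a p q : X, dist p a ≤ r → dist q a ≤ r → e * r ≤ dist p q →
      dist (W p q l) a ≤ (1 - 2*l*(η r e)) * r := by
    intro r hr e he0 he2 l hl0 hl2 a p q h1 h2 h3
    have hm := hmod r hr e he0 he2 a p q h1 h2 h3
    have hid := hsub p q (2*l) (by linarith) (by linarith)
    rw [show (2*l)/2 = l by ring] at hid
    have hw := W1 p (W p q (1/2)) a (2*l) (Set.mem_Icc.mpr ⟨by linarith, by linarith⟩)
    rw [hid] at hw
    rw [dist_comm a p, dist_comm a (W p q (1/2))] at hw
    rw [dist_comm (W p q l) a]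
    have e1 : (1-2*l)*dist p a ≤ (1-2*l)*r := mul_le_mul_of_nonneg_left h1 (by linarith)
    have e2 : (2*l)*dist (W p q (1/2)) a ≤ (2*l)*((1 - η r e)*r) :=
      mul_le_mul_of_nonneg_left hm (by linarith)
    nlinarith [hw, e1, e2]
  have hconv : ∀ r : ℝ, 0 < r → ∀ e : ℝ, 0 < e → e ≤ 2 → ∀ l : ℝ, 0 ≤ l → l ≤ 1 →
      ∀ a p q : X, dist p a ≤ r → dist q a ≤ r → e * r ≤ dist p q →
      dist (W p q l) a ≤ (1 - 2*l*(1-l)*(η r e)) * r := by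
    intro r hr e he0 he2 l hl0 hl1 a p q h1 h2 h3
    have hηr := hηrange r hr e he0 he2
    rcases le_or_gt l (1/2) with hcs | hcs
    · have h := hconvhalf r hr e he0 he2 l hl0 hcs a p q h1 h2 h3
      nlinarith [h, hηr.1, mul_nonneg (mul_nonneg (mul_nonneg hl0 hl0) hηr.1.le) hr.le]
    · rw [W3 p q l (Set.mem_Icc.mpr ⟨hl0, hl1⟩)]
      have h := hconvhalf r hr e he0 he2 (1-l) (by linarith) (by linarith) a q p h2 h1
        (by rwa [dist_comm])
      nlinarith [h, hηr.1,
        mul_nonneg (mul_nonneg (mul_nonneg (by linarith : (0:ℝ) ≤ 1-l)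
          (by linarith : (0:ℝ) ≤ 1-l)) hηr.1.le) hr.le]
  -- ===== iteration facts =====
  have hxC : ∀ n, x n ∈ C := by
    intro n
    induction n with
    | zero => rw [hx0]; exact hx0C
    | succ n ih =>
      rw [hrec n]
      exact hC _ ih _ (hTC _ (hC _ ih _ (hTC _ ih) _ (hs n))) _ (hlam n)
  have hstep : ∀ z, z ∈ C → ∀ δ : ℝ, 0 ≤ δ → dist z (T z) ≤ δ → ∀ n,
      dist (T (W (x n) (T (x n)) (s n))) z ≤ dist (x n) z + 2*δ ∧
      dist (x (n+1)) z ≤ dist (x n) z + 2*δ := by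
    intro z hzC δ hδ0 hδz n
    have hyC : W (x n) (T (x n)) (s n) ∈ C := hC _ (hxC n) _ (hTC _ (hxC n)) _ (hs n)
    obtain ⟨hs0, hs1⟩ := hs n
    have hTxz : dist (T (x n)) z ≤ dist (x n) z + δ := by
      have h1 := dist_triangle (T (x n)) (T z) z
      have h2 := hTnon (x n) (hxC n) z hzC
      have h3 : dist (T z) z ≤ δ := by rw [dist_comm]; exact hδz
      linarith
    have hyz : dist (W (x n) (T (x n)) (s n)) z ≤ dist (x n) z + δ := by
      have hw := W1 (x n) (T (x n)) z (s n) (Set.mem_Icc.mpr ⟨hs0, hs1⟩)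
      rw [dist_comm z (x n), dist_comm z (T (x n))] at hw
      rw [dist_comm]
      have h5 : s n * dist (T (x n)) z ≤ s n * (dist (x n) z + δ) :=
        mul_le_mul_of_nonneg_left hTxz hs0
      have h6 : s n * δ ≤ 1 * δ := mul_le_mul_of_nonneg_right hs1 hδ0
      linarith only [hw, h5, h6]
    have hTy : dist (T (W (x n) (T (x n)) (s n))) z ≤ dist (x n) z + 2*δ := by
      have h1 := dist_triangle (T (W (x n) (T (x n)) (s n))) (T z) z
      have h2 := hTnon _ hyC z hzC
      have h3 : dist (T z) z ≤ δ := by rw [dist_comm]; exact hδz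
      linarith
    refine ⟨hTy, ?_⟩
    rw [hrec n]
    obtain ⟨hl0, hl1⟩ := hlam n
    have hw := W1 (x n) (T (W (x n) (T (x n)) (s n))) z (lam n) (Set.mem_Icc.mpr ⟨hl0, hl1⟩)
    rw [dist_comm z (x n), dist_comm z (T (W (x n) (T (x n)) (s n)))] at hw
    rw [dist_comm]
    have h5 : lam n * dist (T (W (x n) (T (x n)) (s n))) z ≤ lam n * (dist (x n) z + 2*δ) :=
      mul_le_mul_of_nonneg_left hTy hl0
    have h6 : lam n * (2*δ) ≤ 1 * (2*δ) := mul_le_mul_of_nonneg_right hl1 (by linarith)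
    linarith only [hw, h5, h6]
  have hgrow : ∀ z, z ∈ C → ∀ δ : ℝ, 0 ≤ δ → dist z (T z) ≤ δ → dist x0 z ≤ b →
      ∀ n, dist (x n) z ≤ b + 2*(n:ℝ)*δ := by
    intro z hzC δ h0 h1 h2 n
    induction n with
    | zero => rw [hx0]; simpa using h2
    | succ n ih =>
      have h3 := (hstep z hzC δ h0 h1 n).2
      push_cast
      push_cast at ih
      linarith only [h3, ih]
  -- ===== main argument =====
  intro eps heps k
  have hL' : (1:ℝ) ≤ (L:ℝ) := by exact_mod_cast hL
  have hLr : (0:ℝ) < (L:ℝ) * (b+1) := by nlinarith only [hL', hb]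
  set ε' : ℝ := eps / ((L:ℝ) * (b+1)) with hε'def
  set η₀ : ℝ := η (b+1) ε' with hη₀def
  set P : ℕ := ⌈(L:ℝ) * (b+1) / (eps * η₀)⌉₊ with hPdef
  set K : ℕ := P + k + N₀ with hKdef
  set M : ℕ := θ K with hMdef
  clear_value M
  clear_value K
  clear_value P
  clear_value η₀
  clear_value ε'
  have hquarter : ∀ i : ℕ, lam i * (1 - lam i) ≤ 1/4 := fun i => by
    obtain ⟨h0, h1⟩ := hlam i; nlinarith [sq_nonneg (2*lam i - 1)]
  have hlamnn : ∀ i : ℕ, 0 ≤ lam i * (1 - lam i) := fun i => by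
    obtain ⟨h0, h1⟩ := hlam i; nlinarith
  have hθ4 : ∀ m : ℕ, 4*m ≤ θ m + 1 := by
    intro m
    have h1 := hθ m
    have h2 : ∑ i ∈ Finset.range (θ m + 1), lam i * (1 - lam i)
        ≤ ((θ m + 1 : ℕ):ℝ) * (1/4) := by
      calc ∑ i ∈ Finset.range (θ m + 1), lam i * (1 - lam i)
          ≤ ∑ _i ∈ Finset.range (θ m + 1), (1/4:ℝ) :=
            Finset.sum_le_sum (fun i _ => hquarter i)
        _ = ((θ m + 1 : ℕ):ℝ) * (1/4) := by
            rw [Finset.sum_const, Finset.card_range, nsmul_eq_mul]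
    have h3 : (4*(m:ℝ)) ≤ ((θ m + 1 : ℕ):ℝ) := by push_cast at h1 h2 ⊢; linarith only [h1, h2]
    exact_mod_cast h3
  rcases le_or_gt eps (2*((L:ℝ)*(b+1))) with hsmall | hbig
  · -- main case
    have hε'pos : 0 < ε' := by rw [hε'def]; exact div_pos heps hLr
    have hε'2 : ε' ≤ 2 := by rw [hε'def, div_le_iff₀ hLr]; linarith only [hsmall]
    have hb1 : (0:ℝ) < b + 1 := by linarith
    have hη₀r := hηrange (b+1) hb1 ε' hε'pos hε'2
    rw [← hη₀def] at hη₀r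
    obtain ⟨hη₀pos, hη₀le⟩ := hη₀r
    have hPpos : 0 < P := by
      rw [hPdef]
      exact Nat.ceil_pos.mpr (div_pos hLr (mul_pos heps hη₀pos))
    have hPle : (L:ℝ)*(b+1) ≤ (P:ℝ) * (eps * η₀) := by
      have h := Nat.le_ceil ((L:ℝ)*(b+1)/(eps*η₀))
      rw [← hPdef] at h
      rw [div_le_iff₀ (mul_pos heps hη₀pos)] at h
      exact h
    by_contra hcon
    push_neg at hcon
    set A := max k N₀ with hAdef
    clear_value A
    have hθ4K := hθ4 K
    have hAM : A ≤ M := by omega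
    set δ : ℝ := min (1/(2*((M:ℝ)+1))) (min (eps/2) (1/(2*(A:ℝ)+2*(M:ℝ)+(P:ℝ)+3)))
      with hδdef
    clear_value δ
    have hδpos : 0 < δ := by
      rw [hδdef]
      apply lt_min
      · positivity
      apply lt_min
      · positivity
      · positivity
    have hδM : δ ≤ 1/(2*((M:ℝ)+1)) := by rw [hδdef]; exact min_le_left _ _
    have hδeps : δ ≤ eps/2 := by
      rw [hδdef]; exact (min_le_right _ _).trans (min_le_left _ _)
    have hδA : δ ≤ 1/(2*(A:ℝ)+2*(M:ℝ)+(P:ℝ)+3) := by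
      rw [hδdef]; exact (min_le_right _ _).trans (min_le_right _ _)
    obtain ⟨z, hzC, hzb, hzfix⟩ := hafp δ hδpos
    have hzfix' : dist z (T z) ≤ δ := le_of_lt hzfix
    have hgz := hgrow z hzC δ hδpos.le hzfix' hzb
    have key : ∀ j : ℕ, A + j ≤ M + 1 →
        dist (x (A+j)) z + η₀*(eps-δ)*∑ i ∈ Finset.Ico A (A+j), lam i * (1-lam i)
          ≤ b + 2*(((A+j : ℕ)):ℝ)*δ := by
      intro j
      induction j with
      | zero =>
        intro _
        simp only [Nat.add_zero, Finset.Ico_self, Finset.sum_empty, mul_zero, add_zero]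
        exact hgz A
      | succ j ih =>
        intro hle
        have hnM : A + j ≤ M := by omega
        have ihh := ih (by omega)
        have hkn : k ≤ A + j := by omega
        have hN₀n : N₀ ≤ A + j := by omega
        have hdn := hcon (A+j) hkn hnM
        have hsumnn : 0 ≤ ∑ i ∈ Finset.Ico A (A+j), lam i * (1-lam i) :=
          Finset.sum_nonneg fun i _ => hlamnn i
        have hDnn : 0 ≤ η₀*(eps-δ)*∑ i ∈ Finset.Ico A (A+j), lam i * (1-lam i) :=
          mul_nonneg (mul_nonneg hη₀pos.le (by linarith)) hsumnn
        have hxnz : dist (x (A+j)) z ≤ b + 2*(((A+j:ℕ)):ℝ)*δ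
            - η₀*(eps-δ)*∑ i ∈ Finset.Ico A (A+j), lam i * (1-lam i) := by
          linarith only [ihh]
        have hTz2 : dist (x (A+j)) (T (x (A+j))) ≤ 2*dist (x (A+j)) z + δ := by
          have ht := dist_triangle4 (x (A+j)) z (T z) (T (x (A+j)))
          have h5 := hTnon z hzC (x (A+j)) (hxC (A+j))
          rw [dist_comm z (x (A+j))] at h5
          linarith only [ht, h5, hzfix']
        have hlow : (eps - δ)/2 ≤ dist (x (A+j)) z := by linarith only [hdn, hTz2]
        have hyC : W (x (A+j)) (T (x (A+j))) (s (A+j)) ∈ C :=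
          hC _ (hxC _) _ (hTC _ (hxC _)) _ (hs _)
        have hTyz := (hstep z hzC δ hδpos.le hzfix' (A+j)).1
        obtain ⟨hs0, hs1⟩ := hs (A+j)
        have hsLn := hsL (A+j) hN₀n
        have hL0 : (0:ℝ) < (L:ℝ) := by linarith
        have hxy : dist (x (A+j)) (W (x (A+j)) (T (x (A+j))) (s (A+j)))
            = s (A+j) * dist (x (A+j)) (T (x (A+j))) := hda _ _ _ hs0 hs1
        have hTyTx : dist (T (W (x (A+j)) (T (x (A+j))) (s (A+j)))) (T (x (A+j)))
            ≤ dist (x (A+j)) (W (x (A+j)) (T (x (A+j))) (s (A+j))) := by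
          have h := hTnon _ hyC _ (hxC (A+j))
          rw [dist_comm (W (x (A+j)) (T (x (A+j))) (s (A+j))) (x (A+j))] at h
          exact h
        have hlowTy : eps/(L:ℝ) ≤
            dist (x (A+j)) (T (W (x (A+j)) (T (x (A+j))) (s (A+j)))) := by
          have htr := dist_triangle (x (A+j))
            (T (W (x (A+j)) (T (x (A+j))) (s (A+j)))) (T (x (A+j)))
          have h1 : (1 - s (A+j)) * dist (x (A+j)) (T (x (A+j)))
              ≤ dist (x (A+j)) (T (W (x (A+j)) (T (x (A+j))) (s (A+j)))) := by
            linarith only [hxy, hTyTx, htr]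
          have hinv : 1/(L:ℝ) ≤ 1 - s (A+j) := by linarith only [hsLn]
          have hinv0 : (0:ℝ) < 1/(L:ℝ) := by positivity
          have h2 : eps/(L:ℝ) ≤ (1 - s (A+j)) * dist (x (A+j)) (T (x (A+j))) := by
            rw [show eps/(L:ℝ) = (1/(L:ℝ)) * eps by ring]
            exact mul_le_mul hinv hdn heps.le (by linarith only [hinv, hinv0])
          linarith only [h1, h2]
        set Dn : ℝ := η₀*(eps-δ)*∑ i ∈ Finset.Ico A (A+j), lam i * (1-lam i) with hDn
        clear_value Dn
        set rn : ℝ := b + 2*((((A+j:ℕ)):ℝ)+1)*δ - Dn with hrn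
        clear_value rn
        have hrn_lb : dist (x (A+j)) z + 2*δ ≤ rn := by rw [hrn]; linarith only [hxnz]
        have hrnpos : 0 < rn := by
          linarith only [hrn_lb, hδpos, dist_nonneg (x := x (A+j)) (y := z)]
        have h2Mδ : 2*(((A+j:ℕ)):ℝ)*δ + 2*δ ≤ 1 := by
          have hcM : (((A+j:ℕ)):ℝ) ≤ (M:ℝ) := by exact_mod_cast hnM
          have hden : (0:ℝ) < 2*((M:ℝ)+1) := by positivity
          have h1 : δ*(2*((M:ℝ)+1)) ≤ 1 := by
            calc δ*(2*((M:ℝ)+1)) ≤ (1/(2*((M:ℝ)+1)))*(2*((M:ℝ)+1)) :=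
                  mul_le_mul_of_nonneg_right hδM hden.le
              _ = 1 := by field_simp
          nlinarith only [h1, mul_nonneg hδpos.le (by linarith only [hcM] : (0:ℝ) ≤ (M:ℝ) - (((A+j:ℕ)):ℝ))]
        have hrnle : rn ≤ b + 1 := by
          rw [hrn]
          linarith only [h2Mδ, hDnn]
        have hεrn : ε' * rn ≤
            dist (x (A+j)) (T (W (x (A+j)) (T (x (A+j))) (s (A+j)))) := by
          have h1 : ε' * rn ≤ ε' * (b+1) := mul_le_mul_of_nonneg_left hrnle hε'pos.le
          have h2 : ε' * (b+1) = eps/(L:ℝ) := by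
            rw [hε'def]
            field_simp
          linarith only [h1, h2, hlowTy]
        have hcv := hconv rn hrnpos ε' hε'pos hε'2 (lam (A+j)) (hlam (A+j)).1
          (hlam (A+j)).2 z (x (A+j)) (T (W (x (A+j)) (T (x (A+j))) (s (A+j))))
          (by linarith only [hrn_lb, hδpos]) (by linarith only [hTyz, hrn_lb]) hεrn
        have hxn1 : x (A+j+1)
            = W (x (A+j)) (T (W (x (A+j)) (T (x (A+j))) (s (A+j)))) (lam (A+j)) :=
          hrec (A+j)
        rw [← hxn1] at hcv
        have hmono := hηmono ε' hε'pos hε'2 rn (b+1) hrnpos hrnle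
        rw [← hη₀def] at hmono
        have hfac := hlamnn (A+j)
        have e1 : η₀*((eps-δ)/2) ≤ (η rn ε') * rn := by
          apply mul_le_mul hmono (by linarith only [hlow, hrn_lb, hδpos])
            (by linarith only [hδeps, heps]) (le_trans hη₀pos.le hmono)
        have e2 : (lam (A+j)*(1-lam (A+j))) * (η₀*((eps-δ)/2))
            ≤ (lam (A+j)*(1-lam (A+j))) * ((η rn ε')*rn) :=
          mul_le_mul_of_nonneg_left e1 hfac
        have hstep2 : dist (x (A+j+1)) z
            ≤ rn - (lam (A+j)*(1-lam (A+j)))*η₀*(eps-δ) := by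
          nlinarith only [hcv, e2]
        have hsum : ∑ i ∈ Finset.Ico A (A+j+1), lam i * (1-lam i)
            = (∑ i ∈ Finset.Ico A (A+j), lam i * (1-lam i))
              + lam (A+j)*(1-lam (A+j)) :=
          Finset.sum_Ico_succ_top (by omega) _
        have hgA : A + (j+1) = (A + j) + 1 := by omega
        rw [hgA, hsum]
        have hcast1 : (((A+j+1 : ℕ)):ℝ) = (((A+j:ℕ)):ℝ) + 1 := by push_cast; ring
        rw [hcast1]
        rw [hrn, hDn] at hstep2
        linarith only [hstep2]
    have hfinal := key (M+1-A) (by omega)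
    have hAM' : A + (M+1-A) = M+1 := by omega
    rw [hAM'] at hfinal
    have hSnn : 0 ≤ ∑ i ∈ Finset.Ico A (M+1), lam i * (1-lam i) :=
      Finset.sum_nonneg fun i _ => hlamnn i
    have hsplit : (∑ i ∈ Finset.Ico 0 A, lam i * (1-lam i))
        + ∑ i ∈ Finset.Ico A (M+1), lam i * (1-lam i)
        = ∑ i ∈ Finset.Ico 0 (M+1), lam i * (1-lam i) :=
      Finset.sum_Ico_consecutive _ (Nat.zero_le A) (by omega)
    have hhead : ∑ i ∈ Finset.Ico 0 A, lam i * (1-lam i) ≤ (A:ℝ)*(1/4) := by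
      calc ∑ i ∈ Finset.Ico 0 A, lam i * (1-lam i)
          ≤ ∑ _i ∈ Finset.Ico 0 A, (1/4:ℝ) :=
            Finset.sum_le_sum (fun i _ => hquarter i)
        _ = (A:ℝ)*(1/4) := by
            rw [Finset.sum_const, Nat.card_Ico, nsmul_eq_mul]
            simp
    have hθK := hθ K
    rw [← hMdef, Finset.range_eq_Ico] at hθK
    have hKcast : ((K:ℕ):ℝ) = (P:ℝ) + (k:ℝ) + (N₀:ℝ) := by rw [hKdef]; push_cast; ring
    have hAcast : (A:ℝ) ≤ (k:ℝ) + (N₀:ℝ) := by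
      have h : A ≤ k + N₀ := by omega
      exact_mod_cast h
    have hSP : (P:ℝ) ≤ ∑ i ∈ Finset.Ico A (M+1), lam i * (1-lam i) := by
      have hknn : (0:ℝ) ≤ (k:ℝ) := Nat.cast_nonneg k
      have hNnn : (0:ℝ) ≤ (N₀:ℝ) := Nat.cast_nonneg N₀
      linarith only [hθK, hsplit, hhead, hAcast, hKcast, hknn, hNnn]
    have hdnn : (0:ℝ) ≤ dist (x (M+1)) z := dist_nonneg
    have hcastM : (((M+1:ℕ)):ℝ) = (M:ℝ)+1 := by push_cast; ring
    rw [hcastM] at hfinal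
    have hepsδ : 0 < eps - δ := by linarith [hδeps, heps]
    have h1 : η₀*(eps-δ)*(P:ℝ) ≤ η₀*(eps-δ)*∑ i ∈ Finset.Ico A (M+1), lam i * (1-lam i) :=
      mul_le_mul_of_nonneg_left hSP (mul_nonneg hη₀pos.le hepsδ.le)
    have hPnn : (0:ℝ) ≤ (P:ℝ) := Nat.cast_nonneg P
    have h2 : η₀*δ*(P:ℝ) ≤ δ*(P:ℝ) := by
      have h3 : η₀*δ ≤ 1*δ := mul_le_mul_of_nonneg_right hη₀le hδpos.le
      nlinarith only [h3, hPnn]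
    have hδA' : δ*(2*(A:ℝ)+2*(M:ℝ)+(P:ℝ)+3) ≤ 1 := by
      have hden : (0:ℝ) < 2*(A:ℝ)+2*(M:ℝ)+(P:ℝ)+3 := by positivity
      calc δ*(2*(A:ℝ)+2*(M:ℝ)+(P:ℝ)+3)
          ≤ (1/(2*(A:ℝ)+2*(M:ℝ)+(P:ℝ)+3))*(2*(A:ℝ)+2*(M:ℝ)+(P:ℝ)+3) :=
            mul_le_mul_of_nonneg_right hδA hden.le
        _ = 1 := by field_simp
    have hLb : (b+1:ℝ) ≤ (L:ℝ)*(b+1) := by nlinarith only [hL', hb]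
    have hAδnn : (0:ℝ) ≤ δ*(A:ℝ) := mul_nonneg hδpos.le (Nat.cast_nonneg A)
    nlinarith only [hfinal, hdnn, h1, h2, hPle, hLb, hδA', hAδnn, hδpos,
      Nat.cast_nonneg (α := ℝ) M]
  · -- easy case : eps is huge
    refine ⟨k, le_rfl, ?_, ?_⟩
    · have h4 := hθ4 K
      omega
    · have hδ1 : (0:ℝ) < 1/(4*(k:ℝ)+1) := by positivity
      obtain ⟨z, hzC, hzb, hzfix⟩ := hafp (1/(4*(k:ℝ)+1)) hδ1
      have hg := hgrow z hzC _ hδ1.le (le_of_lt hzfix) hzb k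
      have h2 : dist (x k) (T (x k)) ≤ 2*dist (x k) z + 1/(4*(k:ℝ)+1) := by
        have ht := dist_triangle4 (x k) z (T z) (T (x k))
        have h5 := hTnon z hzC (x k) (hxC k)
        rw [dist_comm z (x k)] at h5
        linarith only [ht, h5, le_of_lt hzfix]
      have hk1 : (0:ℝ) < 4*(k:ℝ)+1 := by positivity
      have hc : (4*(k:ℝ)+1) * (1/(4*(k:ℝ)+1)) = 1 := by field_simp
      nlinarith only [hg, h2, hb, hc,
        mul_nonneg (sub_nonneg.mpr hL') (by linarith only [hb] : (0:ℝ) ≤ b+1), hbig]
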